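/- Let φ be a dynamical system on a topological space X (time ℝ≥0) and U ⊆ X. Then the following are equivalent: (1) there exists τ > 0 such that φ_t(closure U) ⊆ interior(U) for all t ≥ τ; (2) there exists τ > 0 such that φ({(t,x) : t ∈ [τ, 2τ], x ∈ closure U}) ⊆ interior(U), i.e. ⋃_{t ∈ [τ,2τ]} φ_t(closure U) ⊆ interior(U). -/

import Mathlib

open Set Topology NNReal

/-- A dynamical system on `X` with time `ℝ≥0`. -/
def IsDynSys {X : Type*} [TopologicalSpace X] (φ : ℝ≥0 × X → X) : Prop :=
  Continuous φ ∧ (∀ x, φ (0, x) = x) ∧ ∀ t s x, φ (t, φ (s, x)) = φ (t + s, x)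

lemma iter_sub {X : Type*} [TopologicalSpace X] (φ : ℝ≥0 × X → X) (hφ : IsDynSys φ)
    (U : Set X) (s : ℝ≥0) (hs : (fun x => φ (s, x)) '' closure U ⊆ interior U) :
    ∀ n : ℕ, 1 ≤ n → (fun x => φ ((n : ℝ≥0) * s, x)) '' closure U ⊆ interior U := by
  intro n
  induction n with
  | zero => intro h; omega
  | succ n ih =>
    intro _
    rcases Nat.eq_or_lt_of_le (Nat.one_le_iff_ne_zero.mpr (Nat.succ_ne_zero n)) with h1 | h1
    · have : n = 0 := by omega
      subst this
      simpa using hs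
    · have hn : 1 ≤ n := by omega
      rintro _ ⟨x, hx, rfl⟩
      have hmem : φ ((n : ℝ≥0) * s, x) ∈ interior U := ih hn ⟨x, hx, rfl⟩
      have hcl : φ ((n : ℝ≥0) * s, x) ∈ closure U :=
        subset_closure (interior_subset hmem)
      have := hs ⟨_, hcl, rfl⟩
      simp only at this
      rw [hφ.2.2 s ((n : ℝ≥0) * s) x] at this
      have harith : ((n : ℝ≥0) + 1) * s = s + (n : ℝ≥0) * s := by ring
      simpa [harith] using this

/-- For a dynamical system `φ` on `X` and `U ⊆ X`, the following are equivalent: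
(1) there is `τ > 0` with `φ_t(cl U) ⊆ int U` for all `t ≥ τ`;
(2) there is `τ > 0` with `⋃_{t ∈ [τ, 2τ]} φ_t(cl U) ⊆ int U`. -/
theorem stmt5 {X : Type*} [TopologicalSpace X] (φ : ℝ≥0 × X → X) (hφ : IsDynSys φ)
    (U : Set X) :
    (∃ τ : ℝ≥0, 0 < τ ∧ ∀ t : ℝ≥0, τ ≤ t → (fun x => φ (t, x)) '' closure U ⊆ interior U) ↔
      ∃ τ : ℝ≥0, 0 < τ ∧ ∀ t ∈ Set.Icc τ (2 * τ),
        (fun x => φ (t, x)) '' closure U ⊆ interior U := by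
  constructor
  · rintro ⟨τ, hτ, h⟩
    exact ⟨τ, hτ, fun t ht => h t ht.1⟩
  · rintro ⟨τ, hτ, h⟩
    refine ⟨τ, hτ, fun t ht => ?_⟩
    set n : ℕ := ⌊t / τ⌋₊ with hn
    have hτ0 : (τ : ℝ≥0) ≠ 0 := hτ.ne'
    have h1n : 1 ≤ n := by
      rw [hn, Nat.one_le_floor_iff, one_le_div hτ.bot_lt]
      exact ht
    have hn0 : (n : ℝ≥0) ≠ 0 := by exact_mod_cast Nat.one_le_iff_ne_zero.mp h1n
    set s : ℝ≥0 := t / n with hs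
    have hts : t = (n : ℝ≥0) * s := by
      rw [hs, mul_div_cancel₀ _ hn0]
    have hτs : τ ≤ s := by
      rw [hs, le_div_iff₀ (pos_iff_ne_zero.mpr hn0)]
      calc τ * n = n * τ := mul_comm _ _
        _ ≤ t := by
          rw [← le_div_iff₀ hτ.bot_lt]
          exact Nat.floor_le zero_le
    have hs2τ : s ≤ 2 * τ := by
      rw [hs, div_le_iff₀ (pos_iff_ne_zero.mpr hn0)]
      have h1 : t < (n + 1 : ℝ≥0) * τ := by
        rw [← div_lt_iff₀ hτ.bot_lt]
        exact_mod_cast Nat.lt_floor_add_one (t / τ)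
      have h2 : (n + 1 : ℝ≥0) * τ ≤ 2 * τ * n := by
        have : (n : ℝ≥0) + 1 ≤ 2 * n := by
          have : (1 : ℝ≥0) ≤ n := by exact_mod_cast h1n
          calc (n : ℝ≥0) + 1 ≤ n + n := by gcongr
            _ = 2 * n := by ring
        calc (n + 1 : ℝ≥0) * τ ≤ 2 * n * τ := by gcongr
          _ = 2 * τ * n := by ring
      exact le_of_lt (lt_of_lt_of_le h1 h2)
    rw [hts]
    exact iter_sub φ hφ U s (h s ⟨hτs, hs2τ⟩) n h1n
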